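/- If each point has a unique nearest anchor, then as α → ∞, H_diff(S) converges to the Shannon entropy of the hard cluster assignment, i.e., -Σ_j (n_j/n) log(n_j/n), where n_j is the number of points whose nearest anchor is c_j. -/

import Mathlib

open scoped BigOperators

noncomputable def softAssign {d n k : ℕ} (α : ℝ)
    (x : Fin n → EuclideanSpace ℝ (Fin d)) (c : Fin k → EuclideanSpace ℝ (Fin d))
    (i : Fin n) (j : Fin k) : ℝ :=
  Real.exp (-α * ‖x i - c j‖ ^ 2) / ∑ ℓ : Fin k, Real.exp (-α * ‖x i - c ℓ‖ ^ 2)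

/-- Cluster probabilities p_j = (1/n) ∑_i p_{ij}. -/
noncomputable def clusterProb {d n k : ℕ} (α : ℝ)
    (x : Fin n → EuclideanSpace ℝ (Fin d)) (c : Fin k → EuclideanSpace ℝ (Fin d))
    (j : Fin k) : ℝ :=
  (1 / (n : ℝ)) * ∑ i : Fin n, softAssign α x c i j

/-- Differentiable entropy estimator (with 0 log 0 = 0, via Real.log 0 = 0). -/
noncomputable def Hdiff {d n k : ℕ} (α : ℝ)
    (x : Fin n → EuclideanSpace ℝ (Fin d)) (c : Fin k → EuclideanSpace ℝ (Fin d)) : ℝ :=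
  -∑ j : Fin k, clusterProb α x c j * Real.log (clusterProb α x c j)

open Filter

lemma softAssign_tendsto {d n k : ℕ}
    (x : Fin n → EuclideanSpace ℝ (Fin d)) (c : Fin k → EuclideanSpace ℝ (Fin d))
    (jstar : Fin n → Fin k)
    (hmin : ∀ i : Fin n, ∀ ℓ : Fin k, ℓ ≠ jstar i → ‖x i - c (jstar i)‖ < ‖x i - c ℓ‖)
    (i : Fin n) (j : Fin k) :
    Tendsto (fun α : ℝ => softAssign α x c i j) atTop
      (nhds (if j = jstar i then 1 else 0)) := by
  set m : ℝ := ‖x i - c (jstar i)‖ ^ 2 with hm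
  set dd : Fin k → ℝ := fun ℓ => ‖x i - c ℓ‖ ^ 2 with hdd
  have key : ∀ α : ℝ, softAssign α x c i j =
      Real.exp (α * (m - dd j)) / ∑ ℓ : Fin k, Real.exp (α * (m - dd ℓ)) := by
    intro α
    have h1 : ∀ ℓ : Fin k, Real.exp (α * (m - dd ℓ))
        = Real.exp (α * m) * Real.exp (-α * dd ℓ) := by
      intro ℓ
      rw [← Real.exp_add]; ring_nf
    rw [h1]
    have h2 : (∑ ℓ : Fin k, Real.exp (α * (m - dd ℓ)))
        = Real.exp (α * m) * ∑ ℓ : Fin k, Real.exp (-α * dd ℓ) := by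
      rw [Finset.mul_sum]
      exact Finset.sum_congr rfl fun ℓ _ => h1 ℓ
    rw [h2, mul_div_mul_left _ _ (Real.exp_ne_zero _)]
    rfl
  simp only [key]
  have hterm : ∀ ℓ : Fin k, Tendsto (fun α : ℝ => Real.exp (α * (m - dd ℓ))) atTop
      (nhds (if ℓ = jstar i then 1 else 0)) := by
    intro ℓ
    by_cases h : ℓ = jstar i
    · subst h
      simp only [sub_self, mul_zero, Real.exp_zero, if_true]
      simp only [show m - dd (jstar i) = 0 from sub_self m, mul_zero, Real.exp_zero]
      exact tendsto_const_nhds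
    · simp only [h, if_false]
      have hlt : m - dd ℓ < 0 :=
        sub_neg.mpr (pow_lt_pow_left₀ (hmin i ℓ h) (norm_nonneg _) (by norm_num))
      exact Real.tendsto_exp_atBot.comp (Tendsto.atTop_mul_const_of_neg hlt tendsto_id)
  have hden : Tendsto (fun α : ℝ => ∑ ℓ : Fin k, Real.exp (α * (m - dd ℓ))) atTop
      (nhds 1) := by
    have := tendsto_finset_sum Finset.univ (fun ℓ _ => hterm ℓ)
    simpa [Finset.sum_ite_eq'] using this
  simpa [Pi.div_def] using (hterm j).div hden one_ne_zero

lemma clusterProb_tendsto {d n k : ℕ}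
    (x : Fin n → EuclideanSpace ℝ (Fin d)) (c : Fin k → EuclideanSpace ℝ (Fin d))
    (jstar : Fin n → Fin k)
    (hmin : ∀ i : Fin n, ∀ ℓ : Fin k, ℓ ≠ jstar i → ‖x i - c (jstar i)‖ < ‖x i - c ℓ‖)
    (j : Fin k) :
    Tendsto (fun α : ℝ => clusterProb α x c j) atTop
      (nhds (((Finset.univ.filter (fun i : Fin n => jstar i = j)).card : ℝ) / n)) := by
  have hsum : Tendsto (fun α : ℝ => ∑ i : Fin n, softAssign α x c i j) atTop
      (nhds (∑ i : Fin n, if j = jstar i then (1:ℝ) else 0)) :=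
    tendsto_finset_sum _ (fun i _ => softAssign_tendsto x c jstar hmin i j)
  have hval : (∑ i : Fin n, if j = jstar i then (1:ℝ) else 0)
      = ((Finset.univ.filter (fun i : Fin n => jstar i = j)).card : ℝ) := by
    have heq : (∑ i : Fin n, if j = jstar i then (1:ℝ) else 0)
        = ∑ i : Fin n, if jstar i = j then (1:ℝ) else 0 := by
      exact Finset.sum_congr rfl fun i _ => by simp [eq_comm]
    rw [heq, Finset.sum_boole]
  unfold clusterProb
  have := hsum.const_mul (1 / (n : ℝ))
  rw [hval] at this
  convert this using 1
  ring

/-- As α → ∞, H_diff converges to the Shannon entropy of the hard cluster assignment. -/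
theorem Hdiff_tendsto_hard_entropy {d n k : ℕ} (hn : 0 < n)
    (x : Fin n → EuclideanSpace ℝ (Fin d)) (c : Fin k → EuclideanSpace ℝ (Fin d))
    (hc : Function.Injective c)
    (jstar : Fin n → Fin k)
    (hmin : ∀ i : Fin n, ∀ ℓ : Fin k, ℓ ≠ jstar i → ‖x i - c (jstar i)‖ < ‖x i - c ℓ‖) :
    Tendsto (fun α : ℝ => Hdiff α x c) atTop
      (nhds (-∑ j : Fin k,
        (((Finset.univ.filter (fun i : Fin n => jstar i = j)).card : ℝ) / n) *
          Real.log (((Finset.univ.filter (fun i : Fin n => jstar i = j)).card : ℝ) / n))) := by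
  unfold Hdiff
  apply Tendsto.neg
  apply tendsto_finset_sum
  intro j _
  exact (Real.continuous_mul_log.tendsto _).comp (clusterProb_tendsto x c jstar hmin j)
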